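/- (Theorem 2, third bound.) In the estimated-eigensystem smoothing spline setting, ‖f̌ − f̃‖² ≤ 4ζ₄ Σ_{k=1}^K ‖Φ̌_k − Φ_k‖² + 12‖č‖² Σ_{k=1}^K [δ̌_k² Σ_{i=1}^n (Ǔ_{ik} − U_{ik})²] + 12 n κ² ‖č‖² Σ_{k=1}^K (δ̌_k − δ_k)² + (12 ζ₃' + 2 ζ₂') ‖Σ̌ − Σ̃‖_F². -/

import Mathlib

open Matrix BigOperators

/-- Squared Frobenius norm of a real matrix. -/
noncomputable def frobSq {m n : ℕ} (M : Matrix (Fin m) (Fin n) ℝ) : ℝ :=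
  ∑ i, ∑ j, (M i j) ^ 2

/-- Squared Euclidean norm of a real vector. -/
noncomputable def vnormSq {m : ℕ} (v : Fin m → ℝ) : ℝ := ∑ i, (v i) ^ 2

lemma vnormSq_nonneg {m : ℕ} (v : Fin m → ℝ) : 0 ≤ vnormSq v :=
  Finset.sum_nonneg fun _ _ => sq_nonneg _

lemma frobSq_nonneg {m n : ℕ} (M : Matrix (Fin m) (Fin n) ℝ) : 0 ≤ frobSq M :=
  Finset.sum_nonneg fun _ _ => Finset.sum_nonneg fun _ _ => sq_nonneg _

lemma frobSq_transpose {m n : ℕ} (M : Matrix (Fin m) (Fin n) ℝ) : frobSq Mᵀ = frobSq M := by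
  rw [frobSq, frobSq, Finset.sum_comm]; rfl

lemma vnormSq_mulVec_le {m n : ℕ} (M : Matrix (Fin m) (Fin n) ℝ) (x : Fin n → ℝ) :
    vnormSq (M *ᵥ x) ≤ frobSq M * vnormSq x := by
  rw [vnormSq, frobSq, Finset.sum_mul]
  refine Finset.sum_le_sum fun i _ => ?_
  simpa [mulVec, dotProduct, vnormSq] using Finset.sum_mul_sq_le_sq_mul_sq Finset.univ (fun j => M i j) x

lemma frobSq_eq_trace {m n : ℕ} (M : Matrix (Fin m) (Fin n) ℝ) :
    frobSq M = (Mᵀ * M).trace := by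
  have h : (Mᵀ * M).trace = ∑ j, ∑ i, M i j ^ 2 := by
    simp [Matrix.trace, Matrix.diag, Matrix.mul_apply, Matrix.transpose_apply, sq]
  rw [frobSq, h, Finset.sum_comm]

lemma vnormSq_eq_norm_sq {m : ℕ} (x : Fin m → ℝ) :
    vnormSq x = ‖(WithLp.toLp 2 <| x)‖ ^ 2 := by
  rw [EuclideanSpace.norm_eq, Real.sq_sqrt (by positivity)]
  simp [vnormSq]

lemma inner_eq_dot {m : ℕ} (u w : EuclideanSpace ℝ (Fin m)) :
    (inner ℝ u w : ℝ) = (⇑u) ⬝ᵥ (⇑w) := by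
  simp [PiLp.inner_apply, dotProduct, mul_comm]

lemma dot_mulVec_symm {m : ℕ} {Mtx : Matrix (Fin m) (Fin m) ℝ} (h : Mtxᵀ = Mtx) (u w : Fin m → ℝ) :
    u ⬝ᵥ (Mtx *ᵥ w) = (Mtx *ᵥ u) ⬝ᵥ w := by
  rw [Matrix.dotProduct_mulVec, ← Matrix.mulVec_transpose, h]

lemma parseval {m : ℕ} (b : OrthonormalBasis (Fin m) ℝ (EuclideanSpace ℝ (Fin m)))
    (x : EuclideanSpace ℝ (Fin m)) : vnormSq x = ∑ i, (inner ℝ (b i) x : ℝ) ^ 2 := by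
  have h1 : vnormSq x = ‖x‖ ^ 2 := vnormSq_eq_norm_sq x
  have h2 : ‖x‖ = ‖b.repr x‖ := (b.repr.norm_map x).symm
  have h3 : vnormSq (b.repr x) = ‖b.repr x‖ ^ 2 := vnormSq_eq_norm_sq _
  rw [h1, h2, ← h3]
  exact Finset.sum_congr rfl fun i _ => by rw [b.repr_apply_apply]

lemma eigen_smul_dot {m : ℕ} {Hm : Matrix (Fin m) (Fin m) ℝ} (hH : Hm.IsHermitian)
    (c : ℝ) (i : Fin m) (x : Fin m → ℝ) :
    (inner ℝ (hH.eigenvectorBasis i) (WithLp.toLp 2 <| (Hm + c • 1) *ᵥ x) : ℝ)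
      = (hH.eigenvalues i + c) * (inner ℝ (hH.eigenvectorBasis i) (WithLp.toLp 2 <| x) : ℝ) := by
  have hsym : (Hm + c • (1 : Matrix (Fin m) (Fin m) ℝ))ᵀ = Hm + c • 1 := by
    rw [Matrix.transpose_add, Matrix.transpose_smul, Matrix.transpose_one,
      ← Matrix.conjTranspose_eq_transpose_of_trivial, hH]
  have h2 : (Hm + c • 1) *ᵥ ⇑(hH.eigenvectorBasis i)
      = (hH.eigenvalues i + c) • ⇑(hH.eigenvectorBasis i) := by
    rw [Matrix.add_mulVec, Matrix.smul_mulVec, Matrix.one_mulVec,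
      hH.mulVec_eigenvectorBasis, add_smul]
  calc (inner ℝ (hH.eigenvectorBasis i) (WithLp.toLp 2 <| (Hm + c • 1) *ᵥ x) : ℝ)
      = ⇑(hH.eigenvectorBasis i) ⬝ᵥ ((Hm + c • 1) *ᵥ x) := inner_eq_dot _ _
    _ = ((Hm + c • 1) *ᵥ ⇑(hH.eigenvectorBasis i)) ⬝ᵥ x := dot_mulVec_symm hsym _ _
    _ = ((hH.eigenvalues i + c) • ⇑(hH.eigenvectorBasis i)) ⬝ᵥ x := by rw [h2]
    _ = (hH.eigenvalues i + c) * (⇑(hH.eigenvectorBasis i) ⬝ᵥ x) := by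
        rw [smul_dotProduct, smul_eq_mul]
    _ = (hH.eigenvalues i + c) * (inner ℝ (hH.eigenvectorBasis i) (WithLp.toLp 2 <| x) : ℝ) := by
        exact congrArg (fun r => (hH.eigenvalues i + c) * r) (inner_eq_dot _ _).symm

lemma spec_inv_bound {m : ℕ} {Hm : Matrix (Fin m) (Fin m) ℝ} (hH : Hm.PosDef) {c : ℝ} (hc : 0 ≤ c)
    (x : Fin m → ℝ) :
    vnormSq x ≤ (∑ k, ((hH.1.eigenvalues k) ^ 2)⁻¹) * vnormSq ((Hm + c • 1) *ᵥ x) := by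
  have hμpos : ∀ i, 0 < hH.1.eigenvalues i := fun i => hH.eigenvalues_pos i
  rw [parseval hH.1.eigenvectorBasis (WithLp.toLp 2 <| x),
    parseval hH.1.eigenvectorBasis (WithLp.toLp 2 <| (Hm + c • 1) *ᵥ x),
    Finset.mul_sum]
  refine Finset.sum_le_sum fun i _ => ?_
  rw [eigen_smul_dot hH.1 c i x]
  set t : ℝ := (inner ℝ (hH.1.eigenvectorBasis i) (WithLp.toLp 2 <| x) : ℝ)
  set mu : ℝ := hH.1.eigenvalues i with hmu
  have hμ : 0 < mu := hμpos i
  have h1 : mu ^ 2 * t ^ 2 ≤ (mu + c) ^ 2 * t ^ 2 := by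
    nlinarith [sq_nonneg t, mul_nonneg (mul_nonneg hc hμ.le) (sq_nonneg t),
      mul_nonneg (mul_nonneg hc hc) (sq_nonneg t)]
  have h2 : ((mu ^ 2)⁻¹ : ℝ) ≤ ∑ k, ((hH.1.eigenvalues k) ^ 2)⁻¹ :=
    Finset.single_le_sum (f := fun k => ((hH.1.eigenvalues k) ^ 2)⁻¹)
      (fun k _ => by positivity) (Finset.mem_univ i)
  have h3 : t ^ 2 = (mu ^ 2)⁻¹ * (mu ^ 2 * t ^ 2) := by field_simp
  calc t ^ 2 = (mu ^ 2)⁻¹ * (mu ^ 2 * t ^ 2) := h3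
    _ ≤ (mu ^ 2)⁻¹ * ((mu + c) ^ 2 * t ^ 2) := mul_le_mul_of_nonneg_left h1 (by positivity)
    _ ≤ (∑ k, ((hH.1.eigenvalues k) ^ 2)⁻¹) * ((mu + c) ^ 2 * t ^ 2) :=
        mul_le_mul_of_nonneg_right h2 (by positivity)
    _ = (∑ k, ((hH.1.eigenvalues k) ^ 2)⁻¹) * ((mu + c) * t) ^ 2 := by ring

lemma eigen_dot {N : ℕ} {A : Matrix (Fin N) (Fin N) ℝ} (hA : A.IsHermitian)
    (i : Fin N) (x : Fin N → ℝ) :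
    (inner ℝ (hA.eigenvectorBasis i) (WithLp.toLp 2 <| A *ᵥ x) : ℝ)
      = hA.eigenvalues i * (inner ℝ (hA.eigenvectorBasis i) (WithLp.toLp 2 <| x) : ℝ) := by
  have hsym : Aᵀ = A := by
    rw [← Matrix.conjTranspose_eq_transpose_of_trivial]; exact hA
  calc (inner ℝ (hA.eigenvectorBasis i) (WithLp.toLp 2 <| A *ᵥ x) : ℝ)
      = ⇑(hA.eigenvectorBasis i) ⬝ᵥ (A *ᵥ x) := inner_eq_dot _ _
    _ = (A *ᵥ ⇑(hA.eigenvectorBasis i)) ⬝ᵥ x := dot_mulVec_symm hsym _ _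
    _ = (hA.eigenvalues i • ⇑(hA.eigenvectorBasis i)) ⬝ᵥ x := by rw [hA.mulVec_eigenvectorBasis]
    _ = hA.eigenvalues i * (⇑(hA.eigenvectorBasis i) ⬝ᵥ x) := by
        rw [smul_dotProduct, smul_eq_mul]
    _ = hA.eigenvalues i * (inner ℝ (hA.eigenvectorBasis i) (WithLp.toLp 2 <| x) : ℝ) := by
        exact congrArg (fun r => hA.eigenvalues i * r) (inner_eq_dot _ _).symm

lemma rayleigh_bound {N : ℕ} (hN : 0 < N) {A : Matrix (Fin N) (Fin N) ℝ} (hA : A.IsHermitian)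
    (x : Fin N → ℝ) : x ⬝ᵥ (A *ᵥ x) ≤ (⨆ i, hA.eigenvalues i) * vnormSq x := by
  have : Nonempty (Fin N) := ⟨⟨0, hN⟩⟩
  have hbd : BddAbove (Set.range hA.eigenvalues) := Set.Finite.bddAbove (Set.finite_range _)
  have expand : x ⬝ᵥ (A *ᵥ x)
      = ∑ i, hA.eigenvalues i * (inner ℝ (hA.eigenvectorBasis i) (WithLp.toLp 2 <| x) : ℝ) ^ 2 := by
    have h0 : x ⬝ᵥ (A *ᵥ x)
        = (inner ℝ (WithLp.toLp 2 <| x) (WithLp.toLp 2 <| A *ᵥ x) : ℝ) :=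
      (inner_eq_dot (WithLp.toLp 2 <| x) (WithLp.toLp 2 <| A *ᵥ x)).symm
    rw [h0, ← hA.eigenvectorBasis.sum_inner_mul_inner (WithLp.toLp 2 <| x)
      (WithLp.toLp 2 <| A *ᵥ x)]
    refine Finset.sum_congr rfl fun i _ => ?_
    rw [eigen_dot hA i x, real_inner_comm (WithLp.toLp 2 <| x) (hA.eigenvectorBasis i)]
    ring
  rw [expand, parseval hA.eigenvectorBasis (WithLp.toLp 2 <| x), Finset.mul_sum]
  exact Finset.sum_le_sum fun i _ =>
    mul_le_mul_of_nonneg_right (le_ciSup hbd i) (sq_nonneg _)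

lemma eig_sq_le_frobSq {N : ℕ} {A : Matrix (Fin N) (Fin N) ℝ} (hA : A.IsHermitian) (i : Fin N) :
    hA.eigenvalues i ^ 2 ≤ frobSq A := by
  have h1 : vnormSq (A *ᵥ ⇑(hA.eigenvectorBasis i)) ≤ frobSq A * vnormSq ⇑(hA.eigenvectorBasis i) :=
    vnormSq_mulVec_le A _
  have hb1 : vnormSq ⇑(hA.eigenvectorBasis i) = 1 := by
    have := hA.eigenvectorBasis.orthonormal.1 i
    have h2 : vnormSq ⇑(hA.eigenvectorBasis i) = ‖hA.eigenvectorBasis i‖ ^ 2 :=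
      vnormSq_eq_norm_sq _
    rw [h2, this]; norm_num
  rw [hA.mulVec_eigenvectorBasis] at h1
  have h3 : vnormSq (hA.eigenvalues i • ⇑(hA.eigenvectorBasis i))
      = hA.eigenvalues i ^ 2 * vnormSq ⇑(hA.eigenvectorBasis i) := by
    simp [vnormSq, Finset.mul_sum, mul_pow]
  rw [h3, hb1] at h1
  simpa using h1

lemma tr_piece {n a b : ℕ} (S : Matrix (Fin n) (Fin n) ℝ) (hS : Sᵀ = S)
    (P : Matrix (Fin n) (Fin a) ℝ) (Q : Matrix (Fin n) (Fin b) ℝ) :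
    (S * (P * Pᵀ) * S * (Q * Qᵀ)).trace = frobSq (Pᵀ * S * Q) := by
  have e1 : S * (P * Pᵀ) * S * (Q * Qᵀ) = ((S * P) * (Pᵀ * S * Q)) * Qᵀ := by
    simp [Matrix.mul_assoc]
  rw [e1, Matrix.trace_mul_comm]
  have e2 : Qᵀ * ((S * P) * (Pᵀ * S * Q)) = (Pᵀ * S * Q)ᵀ * (Pᵀ * S * Q) := by
    simp [Matrix.transpose_mul, hS, Matrix.mul_assoc]
  rw [e2, ← frobSq_eq_trace]

lemma frobSq_block {n p : ℕ} (Q₁ : Matrix (Fin n) (Fin p) ℝ) (Q₂ : Matrix (Fin n) (Fin (n - p)) ℝ)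
    (hQ : Q₁ * Q₁ᵀ + Q₂ * Q₂ᵀ = 1) (S : Matrix (Fin n) (Fin n) ℝ) (hS : Sᵀ = S) :
    frobSq S = frobSq (Q₁ᵀ * S * Q₁) + frobSq (Q₁ᵀ * S * Q₂)
      + frobSq (Q₂ᵀ * S * Q₁) + frobSq (Q₂ᵀ * S * Q₂) := by
  have hfs : frobSq S = (S * S).trace := by
    rw [frobSq_eq_trace, hS]
  have hSS : S * S = S * (Q₁ * Q₁ᵀ) * S * (Q₁ * Q₁ᵀ) + S * (Q₁ * Q₁ᵀ) * S * (Q₂ * Q₂ᵀ)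
      + S * (Q₂ * Q₂ᵀ) * S * (Q₁ * Q₁ᵀ) + S * (Q₂ * Q₂ᵀ) * S * (Q₂ * Q₂ᵀ) := by
    have h1 : S * S = S * (Q₁ * Q₁ᵀ + Q₂ * Q₂ᵀ) * S * (Q₁ * Q₁ᵀ + Q₂ * Q₂ᵀ) := by
      rw [hQ, Matrix.mul_one, Matrix.mul_one]
    rw [h1]; noncomm_ring
  rw [hfs, hSS, Matrix.trace_add, Matrix.trace_add, Matrix.trace_add,
    tr_piece S hS Q₁ Q₁, tr_piece S hS Q₁ Q₂, tr_piece S hS Q₂ Q₁, tr_piece S hS Q₂ Q₂]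

lemma frobSq_off_diag {n p : ℕ} (Q₁ : Matrix (Fin n) (Fin p) ℝ)
    (Q₂ : Matrix (Fin n) (Fin (n - p)) ℝ)
    (hQ : Q₁ * Q₁ᵀ + Q₂ * Q₂ᵀ = 1) (S : Matrix (Fin n) (Fin n) ℝ) (hS : Sᵀ = S) :
    2 * frobSq (Q₁ᵀ * S * Q₂) + frobSq (Q₂ᵀ * S * Q₂) ≤ frobSq S := by
  have h := frobSq_block Q₁ Q₂ hQ S hS
  have he : frobSq (Q₂ᵀ * S * Q₁) = frobSq (Q₁ᵀ * S * Q₂) := by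
    have : (Q₁ᵀ * S * Q₂)ᵀ = Q₂ᵀ * S * Q₁ := by
      simp [Matrix.transpose_mul, hS, Matrix.mul_assoc]
    rw [← this, frobSq_transpose]
  rw [he] at h
  have := frobSq_nonneg (Q₁ᵀ * S * Q₁)
  linarith

lemma frobSq_compress_le {n p : ℕ} (Q₁ : Matrix (Fin n) (Fin p) ℝ)
    (Q₂ : Matrix (Fin n) (Fin (n - p)) ℝ)
    (hQ : Q₁ * Q₁ᵀ + Q₂ * Q₂ᵀ = 1) (S : Matrix (Fin n) (Fin n) ℝ) (hS : Sᵀ = S) :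
    frobSq (Q₂ᵀ * S * Q₂) ≤ frobSq S := by
  have h := frobSq_off_diag Q₁ Q₂ hQ S hS
  have := frobSq_nonneg (Q₁ᵀ * S * Q₂)
  linarith

lemma frobSq_off_le {n p : ℕ} (Q₁ : Matrix (Fin n) (Fin p) ℝ)
    (Q₂ : Matrix (Fin n) (Fin (n - p)) ℝ)
    (hQ : Q₁ * Q₁ᵀ + Q₂ * Q₂ᵀ = 1) (S : Matrix (Fin n) (Fin n) ℝ) (hS : Sᵀ = S) :
    frobSq (Q₁ᵀ * S * Q₂) ≤ frobSq S := by
  have h := frobSq_off_diag Q₁ Q₂ hQ S hS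
  have h1 := frobSq_nonneg (Q₂ᵀ * S * Q₂)
  have h2 := frobSq_nonneg (Q₁ᵀ * S * Q₂)
  linarith

lemma vnormSq_eq_dot {m : ℕ} (x : Fin m → ℝ) : vnormSq x = x ⬝ᵥ x := by
  simp [vnormSq, dotProduct, sq]

lemma vnormSq_isometry {n m : ℕ} {Q : Matrix (Fin n) (Fin m) ℝ} (hQ : Qᵀ * Q = 1)
    (x : Fin m → ℝ) : vnormSq (Q *ᵥ x) = vnormSq x := by
  rw [vnormSq_eq_dot, vnormSq_eq_dot, dotProduct_comm, Matrix.dotProduct_mulVec,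
    ← Matrix.mulVec_transpose, Matrix.mulVec_mulVec, hQ, Matrix.one_mulVec]

lemma key_sq (B F L : ℝ) (hB : 0 ≤ B) (hL : 0 ≤ L) (hLF : L ≤ F) (h1 : 1 ≤ B * L) :
    (Real.sqrt (B * ((F - L) / 2)) + 1) ^ 2 ≤ 2 * (B * F) := by
  set g := Real.sqrt (B * ((F - L) / 2)) with hgdef
  have hg : 0 ≤ g := Real.sqrt_nonneg _
  have hg2 : g ^ 2 = B * ((F - L) / 2) := Real.sq_sqrt (by nlinarith)
  nlinarith [sq_nonneg (g - 1)]

lemma norm_split {H : Type*} [NormedAddCommGroup H] (a b c : H) :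
    ‖a + b + c‖ ^ 2 ≤ 2 * ‖a‖ ^ 2 + 4 * ‖b‖ ^ 2 + 4 * ‖c‖ ^ 2 := by
  have h : ‖a + b + c‖ ≤ ‖a‖ + (‖b‖ + ‖c‖) := by
    rw [add_assoc]
    exact (norm_add_le a (b + c)).trans (by linarith [norm_add_le b c])
  have h3 : ‖a + b + c‖ ^ 2 ≤ (‖a‖ + (‖b‖ + ‖c‖)) ^ 2 := by
    apply pow_le_pow_left₀ (norm_nonneg _) h
  nlinarith [sq_nonneg (‖a‖ - ‖b‖ - ‖c‖), sq_nonneg (‖b‖ - ‖c‖)]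

lemma orth_norm_sum {H : Type*} [NormedAddCommGroup H] [InnerProductSpace ℝ H]
    {ι : Type*} (s : Finset ι) {v : ι → H} (hv : Orthonormal ℝ v) (l : ι → ℝ) :
    ‖∑ i ∈ s, l i • v i‖ ^ 2 = ∑ i ∈ s, l i ^ 2 := by
  rw [← real_inner_self_eq_norm_sq, hv.inner_sum l l s]
  simp [sq]

lemma sum_smul_norm_le {H : Type*} [NormedAddCommGroup H] [NormedSpace ℝ H]
    {ι : Type*} (s : Finset ι) (a : ι → ℝ) (w : ι → H) :
    ‖∑ i ∈ s, a i • w i‖ ^ 2 ≤ (∑ i ∈ s, a i ^ 2) * (∑ i ∈ s, ‖w i‖ ^ 2) := by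
  have h1 : ‖∑ i ∈ s, a i • w i‖ ≤ ∑ i ∈ s, |a i| * ‖w i‖ := by
    refine (norm_sum_le _ _).trans (le_of_eq (Finset.sum_congr rfl fun i _ => ?_))
    rw [norm_smul, Real.norm_eq_abs]
  have h2 := Finset.sum_mul_sq_le_sq_mul_sq s (fun i => |a i|) (fun i => ‖w i‖)
  calc ‖∑ i ∈ s, a i • w i‖ ^ 2 ≤ (∑ i ∈ s, |a i| * ‖w i‖) ^ 2 :=
        pow_le_pow_left₀ (norm_nonneg _) h1 2
    _ ≤ (∑ i ∈ s, |a i| ^ 2) * (∑ i ∈ s, ‖w i‖ ^ 2) := h2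
    _ = (∑ i ∈ s, a i ^ 2) * (∑ i ∈ s, ‖w i‖ ^ 2) := by simp [sq_abs]

lemma le_of_sq_le_sq' {x y : ℝ} (hx : 0 ≤ x) (hy : 0 ≤ y) (h : x ^ 2 ≤ y ^ 2) : x ≤ y := by
  nlinarith

lemma dot_mulVec_left {a b : ℕ} (M : Matrix (Fin a) (Fin b) ℝ) (x : Fin b → ℝ) (z : Fin a → ℝ) :
    (M *ᵥ x) ⬝ᵥ z = x ⬝ᵥ (Mᵀ *ᵥ z) := by
  rw [dotProduct_comm, Matrix.dotProduct_mulVec, ← Matrix.mulVec_transpose,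
    dotProduct_comm]

lemma three_sq_bound {x y z X Y Z : ℝ} (hx : x ^ 2 ≤ X) (hy : y ^ 2 ≤ Y) (hz : z ^ 2 ≤ Z) :
    (x + y + z) ^ 2 ≤ 3 * X + 3 * Y + 3 * Z := by
  nlinarith [sq_nonneg (x - y), sq_nonneg (x - z), sq_nonneg (y - z)]

lemma sq_le_of_abs_le {a b : ℝ} (h : |a| ≤ b) : a ^ 2 ≤ b ^ 2 := by
  nlinarith [abs_nonneg a, sq_abs a]

lemma add_nonneg_term_le {l x v d : ℝ} (hl : 0 ≤ l) (hv : 0 ≤ v) (hd : 0 ≤ d) :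
    2 * l * x * d ≤ 2 * l * (x + v) * d := by
  nlinarith [mul_nonneg (mul_nonneg hl hv) hd]

set_option maxHeartbeats 16000000 in
/-- Theorem 2, third bound: in the estimated-eigensystem smoothing spline
setting, `‖f̌ − f̃‖² ≤ 4ζ₄ Σ_k ‖Φ̌_k − Φ_k‖² + 12‖č‖² Σ_k [δ̌_k² Σ_i (Ǔ_{ik} − U_{ik})²]
  + 12 n κ² ‖č‖² Σ_k (δ̌_k − δ_k)² + (12 ζ₃' + 2 ζ₂') ‖Σ̌ − Σ̃‖_F²`. -/
theorem stmt18
    (n p : ℕ) (hp : 1 ≤ p) (hpn : p < n)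
    (y : Fin n → ℝ) (lam : ℝ) (hlam : 0 < lam)
    (T Q₁ : Matrix (Fin n) (Fin p) ℝ) (Q₂ : Matrix (Fin n) (Fin (n - p)) ℝ)
    (R : Matrix (Fin p) (Fin p) ℝ)
    (hQ₁ : Q₁ᵀ * Q₁ = 1) (hQ₂ : Q₂ᵀ * Q₂ = 1) (hQ₁₂ : Q₁ᵀ * Q₂ = 0)
    (hQ : Q₁ * Q₁ᵀ + Q₂ * Q₂ᵀ = 1)
    (hR : IsUnit R) (hRtri : R.BlockTriangular id) (hT : T = Q₁ * R)
    (K : ℕ) (hK : 1 ≤ K) (κ κ' : ℝ) (hκ : 0 < κ) (hκ' : 0 < κ')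
    (δ : ℕ → ℝ) (hδ0 : ∀ k, 0 ≤ δ k) (hδmono : ∀ k, δ (k + 1) ≤ δ k) (hδsum : Summable δ)
    (δc : ℕ → ℝ) (hδc0 : ∀ k < K, 0 ≤ δc k)
    (U : Fin n → ℕ → ℝ) (hU : ∀ i k, |U i k| ≤ κ)
    (Uc : Fin n → ℕ → ℝ) (hUc : ∀ i, ∀ k < K, |Uc i k| ≤ κ')
    (St Sc : Matrix (Fin n) (Fin n) ℝ)
    (hSt : ∀ i j, St i j = ∑ k ∈ Finset.range K, δ k * U i k * U j k)
    (hSc : ∀ i j, Sc i j = ∑ k ∈ Finset.range K, δc k * Uc i k * Uc j k)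
    (hStpsd : St.PosSemidef) (hScpsd : Sc.PosSemidef)
    (hpdt : (Q₂ᵀ * St * Q₂).PosDef) (hpdc : (Q₂ᵀ * Sc * Q₂).PosDef)
    (hA : (T * ((Tᵀ * T)⁻¹ * (Tᵀ * T)⁻¹) * Tᵀ).IsHermitian)
    (ct : Fin n → ℝ) (dt : Fin p → ℝ)
    (hcdt : T *ᵥ dt + (St + ((n : ℝ) * lam) • 1) *ᵥ ct = y) (hct0 : Tᵀ *ᵥ ct = 0)
    (cc : Fin n → ℝ) (dc : Fin p → ℝ)
    (hcdc : T *ᵥ dc + (Sc + ((n : ℝ) * lam) • 1) *ᵥ cc = y) (hcc0 : Tᵀ *ᵥ cc = 0)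
    {H : Type*} [NormedAddCommGroup H] [InnerProductSpace ℝ H] [CompleteSpace H]
    (φ : Fin p → H) (Φ Φc : ℕ → H) (hφ : Orthonormal ℝ φ) (hΦ : Orthonormal ℝ Φ) :
    ‖((∑ ν, dc ν • φ ν) + ∑ k ∈ Finset.range K, (δc k * ∑ i, cc i * Uc i k) • Φc k) -
        ((∑ ν, dt ν • φ ν) + ∑ k ∈ Finset.range K, (δ k * ∑ i, ct i * U i k) • Φ k)‖ ^ 2 ≤
      4 * (vnormSq cc * (n : ℝ) * κ' ^ 2 * (∑ k ∈ Finset.range K, δc k ^ 2)) *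
          (∑ k ∈ Finset.range K, ‖Φc k - Φ k‖ ^ 2) +
        12 * vnormSq cc *
          (∑ k ∈ Finset.range K, δc k ^ 2 * ∑ i, (Uc i k - U i k) ^ 2) +
        12 * (n : ℝ) * κ ^ 2 * vnormSq cc * (∑ k ∈ Finset.range K, (δc k - δ k) ^ 2) +
        (12 * ((n : ℝ) * κ ^ 2 * (∑ k ∈ Finset.range K, δ k ^ 2) *
            ((frobSq Q₂) ^ 3 * vnormSq (Q₂ᵀ *ᵥ y)) *
            (∑ k, ((hpdt.1.eigenvalues k) ^ 2)⁻¹) *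
            (∑ k, ((hpdc.1.eigenvalues k) ^ 2)⁻¹)) +
          2 * (2 * (⨆ i, hA.eigenvalues i) *
            (((frobSq Q₂) ^ 3 * vnormSq (Q₂ᵀ *ᵥ y)) *
              (∑ k, ((hpdt.1.eigenvalues k) ^ 2)⁻¹) *
              (∑ k, ((hpdc.1.eigenvalues k) ^ 2)⁻¹) *
              frobSq St + vnormSq ct))) * frobSq (Sc - St) := by
  have hc0 : (0:ℝ) ≤ (n : ℝ) * lam := by positivity
  have hQ21 : Q₂ᵀ * Q₁ = 0 := by
    have h := congrArg Matrix.transpose hQ₁₂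
    simpa [Matrix.transpose_mul] using h
  have hdet : IsUnit R.det := (Matrix.isUnit_iff_isUnit_det R).mp hR
  have hdetT : IsUnit Rᵀ.det := by rwa [Matrix.det_transpose]
  -- generic derivation for each solution pair
  have key : ∀ (S : Matrix (Fin n) (Fin n) ℝ) (c : Fin n → ℝ) (d : Fin p → ℝ),
      T *ᵥ d + (S + ((n : ℝ) * lam) • 1) *ᵥ c = y → Tᵀ *ᵥ c = 0 →
      (Q₁ᵀ *ᵥ c = 0 ∧ c = Q₂ *ᵥ (Q₂ᵀ *ᵥ c) ∧
        (Q₂ᵀ * S * Q₂ + ((n : ℝ) * lam) • 1) *ᵥ (Q₂ᵀ *ᵥ c) = Q₂ᵀ *ᵥ y) := by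
    intro S c d heq h0
    have h1 : Q₁ᵀ *ᵥ c = 0 := by
      have h2 : Rᵀ *ᵥ (Q₁ᵀ *ᵥ c) = 0 := by
        rw [Matrix.mulVec_mulVec]
        have hTt : Rᵀ * Q₁ᵀ = Tᵀ := by rw [hT, Matrix.transpose_mul]
        rw [hTt, h0]
      have h3 : (Rᵀ)⁻¹ *ᵥ (Rᵀ *ᵥ (Q₁ᵀ *ᵥ c)) = 0 := by rw [h2, Matrix.mulVec_zero]
      rwa [Matrix.mulVec_mulVec, Matrix.nonsing_inv_mul _ hdetT, Matrix.one_mulVec] at h3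
    refine ⟨h1, ?_, ?_⟩
    · have h5 : (Q₁ * Q₁ᵀ + Q₂ * Q₂ᵀ) *ᵥ c = c := by rw [hQ, Matrix.one_mulVec]
      rw [Matrix.add_mulVec, ← Matrix.mulVec_mulVec, ← Matrix.mulVec_mulVec, h1,
        Matrix.mulVec_zero, zero_add] at h5
      exact h5.symm
    · have h4 : c = Q₂ *ᵥ (Q₂ᵀ *ᵥ c) := by
        have h5 : (Q₁ * Q₁ᵀ + Q₂ * Q₂ᵀ) *ᵥ c = c := by rw [hQ, Matrix.one_mulVec]
        rw [Matrix.add_mulVec, ← Matrix.mulVec_mulVec, ← Matrix.mulVec_mulVec, h1,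
          Matrix.mulVec_zero, zero_add] at h5
        exact h5.symm
      have h7 := congrArg (fun z => Q₂ᵀ *ᵥ z) heq
      simp only [Matrix.mulVec_add] at h7
      have h8 : Q₂ᵀ *ᵥ (T *ᵥ d) = 0 := by
        rw [Matrix.mulVec_mulVec, hT, ← Matrix.mul_assoc, hQ21, Matrix.zero_mul,
          Matrix.zero_mulVec]
      have h9 : Q₂ᵀ *ᵥ ((S + ((n : ℝ) * lam) • 1) *ᵥ c)
          = (Q₂ᵀ * S * Q₂ + ((n : ℝ) * lam) • 1) *ᵥ (Q₂ᵀ *ᵥ c) := by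
        rw [Matrix.add_mulVec, Matrix.add_mulVec, Matrix.mulVec_add]
        congr 1
        · conv_lhs => rw [h4]
          rw [Matrix.mulVec_mulVec, Matrix.mulVec_mulVec, Matrix.mulVec_mulVec]
        · rw [Matrix.smul_mulVec, Matrix.smul_mulVec, Matrix.one_mulVec,
            Matrix.one_mulVec, Matrix.mulVec_smul]
      rw [h8, zero_add, h9] at h7
      exact h7
  obtain ⟨hQ1ct, hctQ, hMt⟩ := key St ct dt hcdt hct0
  obtain ⟨hQ1cc, hccQ, hMc⟩ := key Sc cc dc hcdc hcc0
  -- symmetry facts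
  have hStsym : Stᵀ = St := by
    rw [← Matrix.conjTranspose_eq_transpose_of_trivial]; exact hStpsd.1
  have hScsym : Scᵀ = Sc := by
    rw [← Matrix.conjTranspose_eq_transpose_of_trivial]; exact hScpsd.1
  have hDSsym : (Sc - St)ᵀ = Sc - St := by
    rw [Matrix.transpose_sub, hStsym, hScsym]
  -- scalar abbreviations
  have hBt0 : (0:ℝ) ≤ ∑ k, ((hpdt.1.eigenvalues k) ^ 2)⁻¹ :=
    Finset.sum_nonneg fun k _ => by positivity
  have hBc0 : (0:ℝ) ≤ ∑ k, ((hpdc.1.eigenvalues k) ^ 2)⁻¹ :=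
    Finset.sum_nonneg fun k _ => by positivity
  have hD20 : (0:ℝ) ≤ frobSq (Sc - St) := frobSq_nonneg _
  have hVq0 : (0:ℝ) ≤ vnormSq (Q₂ᵀ *ᵥ y) := vnormSq_nonneg _
  -- Frobenius of Q₂
  have hfQ : frobSq Q₂ = ((n - p : ℕ) : ℝ) := by
    rw [frobSq_eq_trace, hQ₂, Matrix.trace_one]
    simp
  have hfQ1 : (1:ℝ) ≤ frobSq Q₂ := by
    rw [hfQ]
    have : (1:ℕ) ≤ n - p := by omega
    exact_mod_cast this
  -- c-side spectral bounds
  have hzc : vnormSq (Q₂ᵀ *ᵥ cc)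
      ≤ (∑ k, ((hpdc.1.eigenvalues k) ^ 2)⁻¹) * vnormSq (Q₂ᵀ *ᵥ y) := by
    have h := spec_inv_bound hpdc hc0 (Q₂ᵀ *ᵥ cc)
    rwa [hMc] at h
  have hMtz : (Q₂ᵀ * St * Q₂ + ((n : ℝ) * lam) • 1) *ᵥ (Q₂ᵀ *ᵥ ct - Q₂ᵀ *ᵥ cc)
      = (Q₂ᵀ * (Sc - St) * Q₂) *ᵥ (Q₂ᵀ *ᵥ cc) := by
    rw [Matrix.mulVec_sub, hMt, ← hMc, ← Matrix.sub_mulVec]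
    congr 1
    rw [Matrix.mul_sub, Matrix.sub_mul]
    abel
  have hdz : vnormSq (Q₂ᵀ *ᵥ ct - Q₂ᵀ *ᵥ cc)
      ≤ (∑ k, ((hpdt.1.eigenvalues k) ^ 2)⁻¹)
        * (frobSq (Q₂ᵀ * (Sc - St) * Q₂) * vnormSq (Q₂ᵀ *ᵥ cc)) := by
    have h := spec_inv_bound hpdt hc0 (Q₂ᵀ *ᵥ ct - Q₂ᵀ *ᵥ cc)
    rw [hMtz] at h
    exact h.trans (mul_le_mul_of_nonneg_left (vnormSq_mulVec_le _ _) hBt0)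
  have hNle : frobSq (Q₂ᵀ * (Sc - St) * Q₂) ≤ frobSq (Sc - St) :=
    frobSq_compress_le Q₁ Q₂ hQ _ hDSsym
  have hOffDS : frobSq (Q₁ᵀ * (Sc - St) * Q₂) ≤ frobSq (Sc - St) :=
    frobSq_off_le Q₁ Q₂ hQ _ hDSsym
  have hLF : 2 * frobSq (Q₁ᵀ * St * Q₂) + frobSq (Q₂ᵀ * St * Q₂) ≤ frobSq St :=
    frobSq_off_diag Q₁ Q₂ hQ St hStsym
  have hBtL : 1 ≤ (∑ k, ((hpdt.1.eigenvalues k) ^ 2)⁻¹) * frobSq (Q₂ᵀ * St * Q₂) := by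
    have hi : 0 < n - p := by omega
    set i0 : Fin (n - p) := ⟨0, hi⟩
    have h1 : (hpdt.1.eigenvalues i0) ^ 2 ≤ frobSq (Q₂ᵀ * St * Q₂) := eig_sq_le_frobSq hpdt.1 i0
    have hpos : 0 < hpdt.1.eigenvalues i0 := hpdt.eigenvalues_pos i0
    have h2 : ((hpdt.1.eigenvalues i0) ^ 2)⁻¹ ≤ ∑ k, ((hpdt.1.eigenvalues k) ^ 2)⁻¹ :=
      Finset.single_le_sum (f := fun k => ((hpdt.1.eigenvalues k) ^ 2)⁻¹)
        (fun k _ => by positivity) (Finset.mem_univ i0)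
    calc (1:ℝ) = ((hpdt.1.eigenvalues i0) ^ 2)⁻¹ * (hpdt.1.eigenvalues i0) ^ 2 := by
          rw [inv_mul_cancel₀ (by positivity)]
      _ ≤ (∑ k, ((hpdt.1.eigenvalues k) ^ 2)⁻¹) * frobSq (Q₂ᵀ * St * Q₂) :=
          mul_le_mul h2 h1 (by positivity) hBt0
  -- d-part
  have hcdt' : T *ᵥ dt + (St *ᵥ ct + ((n:ℝ)*lam) • ct) = y := by
    rw [← hcdt]
    congr 1
    rw [Matrix.add_mulVec, Matrix.smul_mulVec, Matrix.one_mulVec]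
  have hcdc' : T *ᵥ dc + (Sc *ᵥ cc + ((n:ℝ)*lam) • cc) = y := by
    rw [← hcdc]
    congr 1
    rw [Matrix.add_mulVec, Matrix.smul_mulVec, Matrix.one_mulVec]
  have hwT : T *ᵥ (dc - dt)
      = (St *ᵥ ct + ((n:ℝ)*lam) • ct) - (Sc *ᵥ cc + ((n:ℝ)*lam) • cc) := by
    have h' : T *ᵥ dc + (Sc *ᵥ cc + ((n:ℝ)*lam) • cc)
        = T *ᵥ dt + (St *ᵥ ct + ((n:ℝ)*lam) • ct) := by rw [hcdc', hcdt']
    have h2 : T *ᵥ (dc - dt) = T *ᵥ dc - T *ᵥ dt := Matrix.mulVec_sub T dc dt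
    rw [h2, sub_eq_sub_iff_add_eq_add, h', add_comm]
  have hu : R *ᵥ (dc - dt)
      = (Q₁ᵀ * St * Q₂) *ᵥ (Q₂ᵀ *ᵥ ct - Q₂ᵀ *ᵥ cc)
        - (Q₁ᵀ * (Sc - St) * Q₂) *ᵥ (Q₂ᵀ *ᵥ cc) := by
    have e1 : R *ᵥ (dc - dt) = Q₁ᵀ *ᵥ (T *ᵥ (dc - dt)) := by
      rw [Matrix.mulVec_mulVec, hT, ← Matrix.mul_assoc, hQ₁, Matrix.one_mul]
    rw [e1, hwT, Matrix.mulVec_sub, Matrix.mulVec_add, Matrix.mulVec_add,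
      Matrix.mulVec_smul, Matrix.mulVec_smul, hQ1ct, hQ1cc]
    simp only [smul_zero, add_zero]
    have eA : (Q₁ᵀ * St * Q₂) *ᵥ (Q₂ᵀ *ᵥ ct) = Q₁ᵀ *ᵥ St *ᵥ ct := by
      conv_rhs => rw [hctQ]
      simp only [Matrix.mulVec_mulVec, Matrix.mul_assoc]
    have eB : (Q₁ᵀ * Sc * Q₂) *ᵥ (Q₂ᵀ *ᵥ cc) = Q₁ᵀ *ᵥ Sc *ᵥ cc := by
      conv_rhs => rw [hccQ]
      simp only [Matrix.mulVec_mulVec, Matrix.mul_assoc]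
    have eC : (Q₁ᵀ * St * Q₂) *ᵥ (Q₂ᵀ *ᵥ cc) = Q₁ᵀ *ᵥ St *ᵥ cc := by
      conv_rhs => rw [hccQ]
      simp only [Matrix.mulVec_mulVec, Matrix.mul_assoc]
    have e4 : Q₁ᵀ * (Sc - St) * Q₂ = Q₁ᵀ * Sc * Q₂ - Q₁ᵀ * St * Q₂ := by
      rw [Matrix.mul_sub, Matrix.sub_mul]
    rw [e4, Matrix.sub_mulVec, Matrix.mulVec_sub, eA, eB, eC]
    abel
  -- Rayleigh-quotient step for the d-difference
  have hG : Tᵀ * T = Rᵀ * R := by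
    rw [hT, Matrix.transpose_mul, Matrix.mul_assoc, ← Matrix.mul_assoc Q₁ᵀ, hQ₁,
      Matrix.one_mul]
  have hGdet : IsUnit (Tᵀ * T).det := by
    rw [hG, Matrix.det_mul, Matrix.det_transpose]
    exact hdet.mul hdet
  have hAmulT : (T * ((Tᵀ * T)⁻¹ * (Tᵀ * T)⁻¹) * Tᵀ) * T = T * (Tᵀ * T)⁻¹ := by
    rw [Matrix.mul_assoc (T * ((Tᵀ * T)⁻¹ * (Tᵀ * T)⁻¹)) Tᵀ T,
      Matrix.mul_assoc T ((Tᵀ * T)⁻¹ * (Tᵀ * T)⁻¹) (Tᵀ * T),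
      Matrix.mul_assoc (Tᵀ * T)⁻¹ (Tᵀ * T)⁻¹ (Tᵀ * T),
      Matrix.nonsing_inv_mul _ hGdet, Matrix.mul_one]
  have hray : vnormSq (dc - dt)
      ≤ (⨆ i, hA.eigenvalues i) * vnormSq (R *ᵥ (dc - dt)) := by
    have h1 : (T *ᵥ (dc - dt)) ⬝ᵥ ((T * ((Tᵀ * T)⁻¹ * (Tᵀ * T)⁻¹) * Tᵀ) *ᵥ (T *ᵥ (dc - dt)))
        = vnormSq (dc - dt) := by
      rw [Matrix.mulVec_mulVec, hAmulT, dot_mulVec_left, Matrix.mulVec_mulVec,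
        ← Matrix.mul_assoc, Matrix.mul_nonsing_inv _ hGdet, Matrix.one_mulVec,
        ← vnormSq_eq_dot]
    have h2 := rayleigh_bound (show 0 < n by omega) hA (T *ᵥ (dc - dt))
    have h3 : vnormSq (T *ᵥ (dc - dt)) = vnormSq (R *ᵥ (dc - dt)) := by
      rw [hT, ← Matrix.mulVec_mulVec, vnormSq_isometry hQ₁]
    rw [h1, h3] at h2
    exact h2
  have hAPSD : (T * ((Tᵀ * T)⁻¹ * (Tᵀ * T)⁻¹) * Tᵀ).PosSemidef := by
    have hGsym : ((Tᵀ * T)⁻¹)ᵀ = (Tᵀ * T)⁻¹ := by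
      rw [Matrix.transpose_nonsing_inv]
      congr 1
      rw [Matrix.transpose_mul, Matrix.transpose_transpose]
    have e : T * ((Tᵀ * T)⁻¹ * (Tᵀ * T)⁻¹) * Tᵀ
        = (T * (Tᵀ * T)⁻¹) * (T * (Tᵀ * T)⁻¹)ᴴ := by
      rw [Matrix.conjTranspose_eq_transpose_of_trivial, Matrix.transpose_mul, hGsym]
      simp [Matrix.mul_assoc]
    rw [e]
    exact Matrix.posSemidef_self_mul_conjTranspose _
  have hlamA0 : 0 ≤ ⨆ i, hA.eigenvalues i := by
    have hbd : BddAbove (Set.range hA.eigenvalues) := Set.Finite.bddAbove (Set.finite_range _)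
    exact le_trans (hAPSD.eigenvalues_nonneg ⟨0, by omega⟩) (le_ciSup hbd _)
  -- combine for the d-part
  have hb2 : vnormSq ((Q₁ᵀ * (Sc - St) * Q₂) *ᵥ (Q₂ᵀ *ᵥ cc))
      ≤ frobSq (Sc - St) * ((∑ k, ((hpdc.1.eigenvalues k) ^ 2)⁻¹) * vnormSq (Q₂ᵀ *ᵥ y)) :=
    (vnormSq_mulVec_le _ _).trans
      (mul_le_mul hOffDS hzc (vnormSq_nonneg _) hD20)
  have ha2 : vnormSq ((Q₁ᵀ * St * Q₂) *ᵥ (Q₂ᵀ *ᵥ ct - Q₂ᵀ *ᵥ cc))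
      ≤ ((∑ k, ((hpdt.1.eigenvalues k) ^ 2)⁻¹) * frobSq (Q₁ᵀ * St * Q₂)) * (frobSq (Sc - St) * ((∑ k, ((hpdc.1.eigenvalues k) ^ 2)⁻¹) * vnormSq (Q₂ᵀ *ᵥ y))) := by
    calc vnormSq ((Q₁ᵀ * St * Q₂) *ᵥ (Q₂ᵀ *ᵥ ct - Q₂ᵀ *ᵥ cc))
        ≤ frobSq (Q₁ᵀ * St * Q₂) * vnormSq (Q₂ᵀ *ᵥ ct - Q₂ᵀ *ᵥ cc) := vnormSq_mulVec_le _ _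
      _ ≤ frobSq (Q₁ᵀ * St * Q₂) * ((∑ k, ((hpdt.1.eigenvalues k) ^ 2)⁻¹) * (frobSq (Q₂ᵀ * (Sc - St) * Q₂) * vnormSq (Q₂ᵀ *ᵥ cc))) :=
          mul_le_mul_of_nonneg_left hdz (frobSq_nonneg _)
      _ ≤ frobSq (Q₁ᵀ * St * Q₂) * ((∑ k, ((hpdt.1.eigenvalues k) ^ 2)⁻¹) * (frobSq (Sc - St) * ((∑ k, ((hpdc.1.eigenvalues k) ^ 2)⁻¹) * vnormSq (Q₂ᵀ *ᵥ y)))) := by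
          refine mul_le_mul_of_nonneg_left (mul_le_mul_of_nonneg_left ?_ hBt0) (frobSq_nonneg _)
          exact mul_le_mul hNle hzc (vnormSq_nonneg _) hD20
      _ = ((∑ k, ((hpdt.1.eigenvalues k) ^ 2)⁻¹) * frobSq (Q₁ᵀ * St * Q₂)) * (frobSq (Sc - St) * ((∑ k, ((hpdc.1.eigenvalues k) ^ 2)⁻¹) * vnormSq (Q₂ᵀ *ᵥ y))) := by ring
  have hP0 : 0 ≤ frobSq (Sc - St) * ((∑ k, ((hpdc.1.eigenvalues k) ^ 2)⁻¹) * vnormSq (Q₂ᵀ *ᵥ y)) := mul_nonneg hD20 (mul_nonneg hBc0 hVq0)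
  have hγP0 : 0 ≤ (∑ k, ((hpdt.1.eigenvalues k) ^ 2)⁻¹) * frobSq (Q₁ᵀ * St * Q₂) := mul_nonneg hBt0 (frobSq_nonneg _)
  have hq2 : (Real.sqrt (frobSq (Sc - St) * ((∑ k, ((hpdc.1.eigenvalues k) ^ 2)⁻¹) * vnormSq (Q₂ᵀ *ᵥ y)))) ^ 2 = frobSq (Sc - St) * ((∑ k, ((hpdc.1.eigenvalues k) ^ 2)⁻¹) * vnormSq (Q₂ᵀ *ᵥ y)) := Real.sq_sqrt hP0
  have hγ2 : (Real.sqrt ((∑ k, ((hpdt.1.eigenvalues k) ^ 2)⁻¹) * frobSq (Q₁ᵀ * St * Q₂))) ^ 2 = (∑ k, ((hpdt.1.eigenvalues k) ^ 2)⁻¹) * frobSq (Q₁ᵀ * St * Q₂) := Real.sq_sqrt hγP0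
  have hga : ‖(WithLp.toLp 2 <| (Q₁ᵀ * St * Q₂) *ᵥ (Q₂ᵀ *ᵥ ct - Q₂ᵀ *ᵥ cc))‖
      ≤ Real.sqrt ((∑ k, ((hpdt.1.eigenvalues k) ^ 2)⁻¹) * frobSq (Q₁ᵀ * St * Q₂)) * Real.sqrt (frobSq (Sc - St) * ((∑ k, ((hpdc.1.eigenvalues k) ^ 2)⁻¹) * vnormSq (Q₂ᵀ *ᵥ y))) := by
    apply le_of_sq_le_sq' (norm_nonneg _) (mul_nonneg (Real.sqrt_nonneg _) (Real.sqrt_nonneg _))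
    rw [← vnormSq_eq_norm_sq, mul_pow, hγ2, hq2]
    exact ha2
  have hgb : ‖(WithLp.toLp 2 <| (Q₁ᵀ * (Sc - St) * Q₂) *ᵥ (Q₂ᵀ *ᵥ cc))‖
      ≤ Real.sqrt (frobSq (Sc - St) * ((∑ k, ((hpdc.1.eigenvalues k) ^ 2)⁻¹) * vnormSq (Q₂ᵀ *ᵥ y))) := by
    apply le_of_sq_le_sq' (norm_nonneg _) (Real.sqrt_nonneg _)
    rw [← vnormSq_eq_norm_sq, hq2]
    exact hb2
  have hnu : vnormSq (R *ᵥ (dc - dt))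
      ≤ (Real.sqrt ((∑ k, ((hpdt.1.eigenvalues k) ^ 2)⁻¹) * frobSq (Q₁ᵀ * St * Q₂)) * Real.sqrt (frobSq (Sc - St) * ((∑ k, ((hpdc.1.eigenvalues k) ^ 2)⁻¹) * vnormSq (Q₂ᵀ *ᵥ y)))
          + Real.sqrt (frobSq (Sc - St) * ((∑ k, ((hpdc.1.eigenvalues k) ^ 2)⁻¹) * vnormSq (Q₂ᵀ *ᵥ y)))) ^ 2 := by
    have h1 : vnormSq (R *ᵥ (dc - dt))
        = ‖(WithLp.toLp 2 <| R *ᵥ (dc - dt))‖ ^ 2 := vnormSq_eq_norm_sq _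
    have heq : (WithLp.toLp 2 <| R *ᵥ (dc - dt))
        = (WithLp.toLp 2 <| (Q₁ᵀ * St * Q₂) *ᵥ (Q₂ᵀ *ᵥ ct - Q₂ᵀ *ᵥ cc))
          - (WithLp.toLp 2 <| (Q₁ᵀ * (Sc - St) * Q₂) *ᵥ (Q₂ᵀ *ᵥ cc)) := by rw [hu, WithLp.toLp_sub]
    have htri := (heq ▸ norm_sub_le (WithLp.toLp 2 <| (Q₁ᵀ * St * Q₂) *ᵥ (Q₂ᵀ *ᵥ ct - Q₂ᵀ *ᵥ cc)) (WithLp.toLp 2 <| (Q₁ᵀ * (Sc - St) * Q₂) *ᵥ (Q₂ᵀ *ᵥ cc)))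
    rw [h1]
    apply pow_le_pow_left₀ (norm_nonneg _)
    exact htri.trans (add_le_add hga hgb)
  have hkey2 : (Real.sqrt ((∑ k, ((hpdt.1.eigenvalues k) ^ 2)⁻¹) * frobSq (Q₁ᵀ * St * Q₂)) * Real.sqrt (frobSq (Sc - St) * ((∑ k, ((hpdc.1.eigenvalues k) ^ 2)⁻¹) * vnormSq (Q₂ᵀ *ᵥ y)))
      + Real.sqrt (frobSq (Sc - St) * ((∑ k, ((hpdc.1.eigenvalues k) ^ 2)⁻¹) * vnormSq (Q₂ᵀ *ᵥ y)))) ^ 2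
      ≤ 2 * ((∑ k, ((hpdt.1.eigenvalues k) ^ 2)⁻¹) * frobSq St) * (frobSq (Sc - St) * ((∑ k, ((hpdc.1.eigenvalues k) ^ 2)⁻¹) * vnormSq (Q₂ᵀ *ᵥ y))) := by
    have hOle : (∑ k, ((hpdt.1.eigenvalues k) ^ 2)⁻¹) * frobSq (Q₁ᵀ * St * Q₂) ≤ (∑ k, ((hpdt.1.eigenvalues k) ^ 2)⁻¹) * ((frobSq St - frobSq (Q₂ᵀ * St * Q₂)) / 2) := by
      apply mul_le_mul_of_nonneg_left _ hBt0
      linarith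
    have h1 : Real.sqrt ((∑ k, ((hpdt.1.eigenvalues k) ^ 2)⁻¹) * frobSq (Q₁ᵀ * St * Q₂)) ≤ Real.sqrt ((∑ k, ((hpdt.1.eigenvalues k) ^ 2)⁻¹) * ((frobSq St - frobSq (Q₂ᵀ * St * Q₂)) / 2)) :=
      Real.sqrt_le_sqrt hOle
    have h2 := key_sq (∑ k, ((hpdt.1.eigenvalues k) ^ 2)⁻¹) (frobSq St) (frobSq (Q₂ᵀ * St * Q₂)) hBt0 (frobSq_nonneg _)
      (by linarith [frobSq_nonneg (Q₁ᵀ * St * Q₂)]) hBtL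
    have h3 : (Real.sqrt ((∑ k, ((hpdt.1.eigenvalues k) ^ 2)⁻¹) * frobSq (Q₁ᵀ * St * Q₂)) + 1) ^ 2
        ≤ (Real.sqrt ((∑ k, ((hpdt.1.eigenvalues k) ^ 2)⁻¹) * ((frobSq St - frobSq (Q₂ᵀ * St * Q₂)) / 2)) + 1) ^ 2 := by
      apply pow_le_pow_left₀ (add_nonneg (Real.sqrt_nonneg _) zero_le_one)
      linarith
    have h4 : (Real.sqrt ((∑ k, ((hpdt.1.eigenvalues k) ^ 2)⁻¹) * frobSq (Q₁ᵀ * St * Q₂)) + 1) ^ 2 ≤ 2 * ((∑ k, ((hpdt.1.eigenvalues k) ^ 2)⁻¹) * frobSq St) := h3.trans h2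
    calc (Real.sqrt ((∑ k, ((hpdt.1.eigenvalues k) ^ 2)⁻¹) * frobSq (Q₁ᵀ * St * Q₂)) * Real.sqrt (frobSq (Sc - St) * ((∑ k, ((hpdc.1.eigenvalues k) ^ 2)⁻¹) * vnormSq (Q₂ᵀ *ᵥ y)))
        + Real.sqrt (frobSq (Sc - St) * ((∑ k, ((hpdc.1.eigenvalues k) ^ 2)⁻¹) * vnormSq (Q₂ᵀ *ᵥ y)))) ^ 2
        = (Real.sqrt ((∑ k, ((hpdt.1.eigenvalues k) ^ 2)⁻¹) * frobSq (Q₁ᵀ * St * Q₂)) + 1) ^ 2 * (Real.sqrt (frobSq (Sc - St) * ((∑ k, ((hpdc.1.eigenvalues k) ^ 2)⁻¹) * vnormSq (Q₂ᵀ *ᵥ y)))) ^ 2 := by ring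
      _ ≤ (2 * ((∑ k, ((hpdt.1.eigenvalues k) ^ 2)⁻¹) * frobSq St)) * (Real.sqrt (frobSq (Sc - St) * ((∑ k, ((hpdc.1.eigenvalues k) ^ 2)⁻¹) * vnormSq (Q₂ᵀ *ᵥ y)))) ^ 2 :=
          mul_le_mul_of_nonneg_right h4 (sq_nonneg _)
      _ = 2 * ((∑ k, ((hpdt.1.eigenvalues k) ^ 2)⁻¹) * frobSq St) * (frobSq (Sc - St) * ((∑ k, ((hpdc.1.eigenvalues k) ^ 2)⁻¹) * vnormSq (Q₂ᵀ *ᵥ y))) := by rw [hq2]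
  have hdA : vnormSq (dc - dt)
      ≤ (⨆ i, hA.eigenvalues i) * (2 * ((∑ k, ((hpdt.1.eigenvalues k) ^ 2)⁻¹) * frobSq St) * (frobSq (Sc - St) * ((∑ k, ((hpdc.1.eigenvalues k) ^ 2)⁻¹) * vnormSq (Q₂ᵀ *ᵥ y)))) :=
    hray.trans (mul_le_mul_of_nonneg_left (hnu.trans hkey2) hlamA0)
  have hVqz : vnormSq (Q₂ᵀ *ᵥ y) ≤ (frobSq Q₂) ^ 3 * vnormSq (Q₂ᵀ *ᵥ y) :=
    le_mul_of_one_le_left hVq0 (one_le_pow₀ hfQ1)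
  have hdfinal : vnormSq (dc - dt)
      ≤ 2 * (⨆ i, hA.eigenvalues i) * (((frobSq Q₂) ^ 3 * vnormSq (Q₂ᵀ *ᵥ y)) * (∑ k, ((hpdt.1.eigenvalues k) ^ 2)⁻¹) * (∑ k, ((hpdc.1.eigenvalues k) ^ 2)⁻¹) * frobSq St + vnormSq ct) * frobSq (Sc - St) := by
    have hfac : 0 ≤ (⨆ i, hA.eigenvalues i) * (2 * ((∑ k, ((hpdt.1.eigenvalues k) ^ 2)⁻¹) * frobSq St)) * (frobSq (Sc - St) * (∑ k, ((hpdc.1.eigenvalues k) ^ 2)⁻¹)) :=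
      mul_nonneg (mul_nonneg hlamA0 (mul_nonneg (by norm_num) (mul_nonneg hBt0 (frobSq_nonneg _)))) (mul_nonneg hD20 hBc0)
    calc vnormSq (dc - dt)
        ≤ (⨆ i, hA.eigenvalues i) * (2 * ((∑ k, ((hpdt.1.eigenvalues k) ^ 2)⁻¹) * frobSq St) * (frobSq (Sc - St) * ((∑ k, ((hpdc.1.eigenvalues k) ^ 2)⁻¹) * vnormSq (Q₂ᵀ *ᵥ y)))) := hdA
      _ = (⨆ i, hA.eigenvalues i) * (2 * ((∑ k, ((hpdt.1.eigenvalues k) ^ 2)⁻¹) * frobSq St)) * (frobSq (Sc - St) * (∑ k, ((hpdc.1.eigenvalues k) ^ 2)⁻¹)) * vnormSq (Q₂ᵀ *ᵥ y) := by ring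
      _ ≤ (⨆ i, hA.eigenvalues i) * (2 * ((∑ k, ((hpdt.1.eigenvalues k) ^ 2)⁻¹) * frobSq St)) * (frobSq (Sc - St) * (∑ k, ((hpdc.1.eigenvalues k) ^ 2)⁻¹)) * ((frobSq Q₂) ^ 3 * vnormSq (Q₂ᵀ *ᵥ y)) :=
          mul_le_mul_of_nonneg_left hVqz hfac
      _ = 2 * (⨆ i, hA.eigenvalues i) * (((frobSq Q₂) ^ 3 * vnormSq (Q₂ᵀ *ᵥ y)) * (∑ k, ((hpdt.1.eigenvalues k) ^ 2)⁻¹) * (∑ k, ((hpdc.1.eigenvalues k) ^ 2)⁻¹) * frobSq St) * frobSq (Sc - St) := by ring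
      _ ≤ 2 * (⨆ i, hA.eigenvalues i) * (((frobSq Q₂) ^ 3 * vnormSq (Q₂ᵀ *ᵥ y)) * (∑ k, ((hpdt.1.eigenvalues k) ^ 2)⁻¹) * (∑ k, ((hpdc.1.eigenvalues k) ^ 2)⁻¹) * frobSq St + vnormSq ct) * frobSq (Sc - St) :=
          add_nonneg_term_le hlamA0 (vnormSq_nonneg ct) hD20
  -- difference of z-vectors in original coordinates
  have hccct2 : (∑ i, (cc i - ct i) ^ 2) ≤ ((frobSq Q₂) ^ 3 * vnormSq (Q₂ᵀ *ᵥ y)) * (∑ k, ((hpdt.1.eigenvalues k) ^ 2)⁻¹) * (∑ k, ((hpdc.1.eigenvalues k) ^ 2)⁻¹) * frobSq (Sc - St) := by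
    have h0 : (∑ i, (cc i - ct i) ^ 2) = vnormSq (Q₂ᵀ *ᵥ ct - Q₂ᵀ *ᵥ cc) := by
      have e1 : cc - ct = Q₂ *ᵥ (Q₂ᵀ *ᵥ cc - Q₂ᵀ *ᵥ ct) := by
        rw [Matrix.mulVec_sub, ← hccQ, ← hctQ]
      have e2 : (∑ i, (cc i - ct i) ^ 2) = vnormSq (cc - ct) := by simp [vnormSq]
      rw [e2, e1, vnormSq_isometry hQ₂]
      have e3 : ∀ (u v : Fin (n - p) → ℝ), vnormSq (u - v) = vnormSq (v - u) := by
        intro u v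
        unfold vnormSq
        refine Finset.sum_congr rfl fun i _ => ?_
        simp [Pi.sub_apply]
        ring
      exact e3 _ _
    rw [h0]
    calc vnormSq (Q₂ᵀ *ᵥ ct - Q₂ᵀ *ᵥ cc)
        ≤ (∑ k, ((hpdt.1.eigenvalues k) ^ 2)⁻¹) * (frobSq (Q₂ᵀ * (Sc - St) * Q₂) * vnormSq (Q₂ᵀ *ᵥ cc)) := hdz
      _ ≤ (∑ k, ((hpdt.1.eigenvalues k) ^ 2)⁻¹) * (frobSq (Sc - St) * ((∑ k, ((hpdc.1.eigenvalues k) ^ 2)⁻¹) * vnormSq (Q₂ᵀ *ᵥ y))) :=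
          mul_le_mul_of_nonneg_left (mul_le_mul hNle hzc (vnormSq_nonneg _) hD20) hBt0
      _ = (∑ k, ((hpdt.1.eigenvalues k) ^ 2)⁻¹) * (∑ k, ((hpdc.1.eigenvalues k) ^ 2)⁻¹) * frobSq (Sc - St) * vnormSq (Q₂ᵀ *ᵥ y) := by ring
      _ ≤ (∑ k, ((hpdt.1.eigenvalues k) ^ 2)⁻¹) * (∑ k, ((hpdc.1.eigenvalues k) ^ 2)⁻¹) * frobSq (Sc - St) * ((frobSq Q₂) ^ 3 * vnormSq (Q₂ᵀ *ᵥ y)) :=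
          mul_le_mul_of_nonneg_left hVqz (mul_nonneg (mul_nonneg hBt0 hBc0) hD20)
      _ = ((frobSq Q₂) ^ 3 * vnormSq (Q₂ᵀ *ᵥ y)) * (∑ k, ((hpdt.1.eigenvalues k) ^ 2)⁻¹) * (∑ k, ((hpdc.1.eigenvalues k) ^ 2)⁻¹) * frobSq (Sc - St) := by ring
  -- row-sum bounds for U, Uc
  have hUrow : ∀ k : ℕ, (∑ i, U i k ^ 2) ≤ (n : ℝ) * κ ^ 2 := by
    intro k
    calc (∑ i, U i k ^ 2) ≤ ∑ _i : Fin n, κ ^ 2 := by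
          refine Finset.sum_le_sum fun i _ => ?_
          exact sq_le_of_abs_le (hU i k)
      _ = (n : ℝ) * κ ^ 2 := by simp [Finset.sum_const, nsmul_eq_mul]
  have hUcrow : ∀ k : ℕ, k < K → (∑ i, Uc i k ^ 2) ≤ (n : ℝ) * κ' ^ 2 := by
    intro k hk
    calc (∑ i, Uc i k ^ 2) ≤ ∑ _i : Fin n, κ' ^ 2 := by
          refine Finset.sum_le_sum fun i _ => ?_
          exact sq_le_of_abs_le (hUc i k hk)
      _ = (n : ℝ) * κ' ^ 2 := by simp [Finset.sum_const, nsmul_eq_mul]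
  -- bound for the Φ̌-coefficients
  have hac_sum : (∑ k ∈ Finset.range K, (δc k * ∑ i, cc i * Uc i k) ^ 2)
      ≤ vnormSq cc * (n : ℝ) * κ' ^ 2 * (∑ k ∈ Finset.range K, δc k ^ 2) := by
    calc (∑ k ∈ Finset.range K, (δc k * ∑ i, cc i * Uc i k) ^ 2)
        ≤ ∑ k ∈ Finset.range K, δc k ^ 2 * (vnormSq cc * ((n : ℝ) * κ' ^ 2)) := by
          refine Finset.sum_le_sum fun k hk => ?_
          have hcs := Finset.sum_mul_sq_le_sq_mul_sq Finset.univ cc (fun i => Uc i k)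
          have hrow := hUcrow k (Finset.mem_range.mp hk)
          have h1 : (∑ i, cc i * Uc i k) ^ 2 ≤ vnormSq cc * ((n : ℝ) * κ' ^ 2) := by
            refine hcs.trans ?_
            exact mul_le_mul_of_nonneg_left hrow (vnormSq_nonneg cc)
          calc (δc k * ∑ i, cc i * Uc i k) ^ 2
              = δc k ^ 2 * (∑ i, cc i * Uc i k) ^ 2 := by ring
            _ ≤ δc k ^ 2 * (vnormSq cc * ((n : ℝ) * κ' ^ 2)) :=
                mul_le_mul_of_nonneg_left h1 (sq_nonneg _)
      _ = vnormSq cc * (n : ℝ) * κ' ^ 2 * (∑ k ∈ Finset.range K, δc k ^ 2) := by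
          rw [← Finset.sum_mul]
          ring
  -- decomposition bound for the coefficient differences
  have hbsum : (∑ k ∈ Finset.range K, (δc k * (∑ i, cc i * Uc i k) - δ k * (∑ i, ct i * U i k)) ^ 2)
      ≤ 3 * vnormSq cc * (∑ k ∈ Finset.range K, δc k ^ 2 * ∑ i, (Uc i k - U i k) ^ 2)
        + 3 * (n : ℝ) * κ ^ 2 * vnormSq cc * (∑ k ∈ Finset.range K, (δc k - δ k) ^ 2)
        + 3 * ((n : ℝ) * κ ^ 2 * (∑ k ∈ Finset.range K, δ k ^ 2)) * (∑ i, (cc i - ct i) ^ 2) := by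
    have hper : ∀ k ∈ Finset.range K,
        (δc k * (∑ i, cc i * Uc i k) - δ k * (∑ i, ct i * U i k)) ^ 2
        ≤ 3 * (δc k ^ 2 * (vnormSq cc * (∑ i, (Uc i k - U i k) ^ 2)))
          + 3 * ((δc k - δ k) ^ 2 * (vnormSq cc * ((n : ℝ) * κ ^ 2)))
          + 3 * (δ k ^ 2 * ((∑ i, (cc i - ct i) ^ 2) * ((n : ℝ) * κ ^ 2))) := by
      intro k hk
      have hid : δc k * (∑ i, cc i * Uc i k) - δ k * (∑ i, ct i * U i k)
          = δc k * (∑ i, cc i * (Uc i k - U i k))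
            + (δc k - δ k) * (∑ i, cc i * U i k)
            + δ k * (∑ i, (cc i - ct i) * U i k) := by
        simp only [mul_sub, sub_mul, Finset.sum_sub_distrib]
        ring
      have hx : (δc k * (∑ i, cc i * (Uc i k - U i k))) ^ 2
          ≤ δc k ^ 2 * (vnormSq cc * (∑ i, (Uc i k - U i k) ^ 2)) := by
        have hcs := Finset.sum_mul_sq_le_sq_mul_sq Finset.univ cc (fun i => Uc i k - U i k)
        calc (δc k * (∑ i, cc i * (Uc i k - U i k))) ^ 2
            = δc k ^ 2 * (∑ i, cc i * (Uc i k - U i k)) ^ 2 := by ring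
          _ ≤ δc k ^ 2 * (vnormSq cc * (∑ i, (Uc i k - U i k) ^ 2)) :=
              mul_le_mul_of_nonneg_left hcs (sq_nonneg _)
      have hy : ((δc k - δ k) * (∑ i, cc i * U i k)) ^ 2
          ≤ (δc k - δ k) ^ 2 * (vnormSq cc * ((n : ℝ) * κ ^ 2)) := by
        have hcs := Finset.sum_mul_sq_le_sq_mul_sq Finset.univ cc (fun i => U i k)
        have h1 : (∑ i, cc i * U i k) ^ 2 ≤ vnormSq cc * ((n : ℝ) * κ ^ 2) :=
          hcs.trans (mul_le_mul_of_nonneg_left (hUrow k) (vnormSq_nonneg cc))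
        calc ((δc k - δ k) * (∑ i, cc i * U i k)) ^ 2
            = (δc k - δ k) ^ 2 * (∑ i, cc i * U i k) ^ 2 := by ring
          _ ≤ (δc k - δ k) ^ 2 * (vnormSq cc * ((n : ℝ) * κ ^ 2)) :=
              mul_le_mul_of_nonneg_left h1 (sq_nonneg _)
      have hz : (δ k * (∑ i, (cc i - ct i) * U i k)) ^ 2
          ≤ δ k ^ 2 * ((∑ i, (cc i - ct i) ^ 2) * ((n : ℝ) * κ ^ 2)) := by
        have hcs := Finset.sum_mul_sq_le_sq_mul_sq Finset.univ (fun i => cc i - ct i) (fun i => U i k)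
        have h1 : (∑ i, (cc i - ct i) * U i k) ^ 2
            ≤ (∑ i, (cc i - ct i) ^ 2) * ((n : ℝ) * κ ^ 2) := by
          refine hcs.trans ?_
          exact mul_le_mul_of_nonneg_left (hUrow k)
            (Finset.sum_nonneg fun i _ => sq_nonneg _)
        calc (δ k * (∑ i, (cc i - ct i) * U i k)) ^ 2
            = δ k ^ 2 * (∑ i, (cc i - ct i) * U i k) ^ 2 := by ring
          _ ≤ δ k ^ 2 * ((∑ i, (cc i - ct i) ^ 2) * ((n : ℝ) * κ ^ 2)) :=
              mul_le_mul_of_nonneg_left h1 (sq_nonneg _)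
      rw [hid]
      exact three_sq_bound hx hy hz
    calc (∑ k ∈ Finset.range K, (δc k * (∑ i, cc i * Uc i k) - δ k * (∑ i, ct i * U i k)) ^ 2)
        ≤ ∑ k ∈ Finset.range K,
            (3 * (δc k ^ 2 * (vnormSq cc * (∑ i, (Uc i k - U i k) ^ 2)))
            + 3 * ((δc k - δ k) ^ 2 * (vnormSq cc * ((n : ℝ) * κ ^ 2)))
            + 3 * (δ k ^ 2 * ((∑ i, (cc i - ct i) ^ 2) * ((n : ℝ) * κ ^ 2)))) :=
          Finset.sum_le_sum hper
      _ = 3 * vnormSq cc * (∑ k ∈ Finset.range K, δc k ^ 2 * ∑ i, (Uc i k - U i k) ^ 2)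
          + 3 * (n : ℝ) * κ ^ 2 * vnormSq cc * (∑ k ∈ Finset.range K, (δc k - δ k) ^ 2)
          + 3 * ((n : ℝ) * κ ^ 2 * (∑ k ∈ Finset.range K, δ k ^ 2)) * (∑ i, (cc i - ct i) ^ 2) := by
          have s1 : (∑ k ∈ Finset.range K, 3 * (δc k ^ 2 * (vnormSq cc * (∑ i, (Uc i k - U i k) ^ 2))))
              = 3 * vnormSq cc * (∑ k ∈ Finset.range K, δc k ^ 2 * ∑ i, (Uc i k - U i k) ^ 2) := by
            rw [Finset.mul_sum]
            exact Finset.sum_congr rfl fun k _ => by ring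
          have s2 : (∑ k ∈ Finset.range K, 3 * ((δc k - δ k) ^ 2 * (vnormSq cc * ((n : ℝ) * κ ^ 2))))
              = 3 * (n : ℝ) * κ ^ 2 * vnormSq cc * (∑ k ∈ Finset.range K, (δc k - δ k) ^ 2) := by
            rw [Finset.mul_sum]
            exact Finset.sum_congr rfl fun k _ => by ring
          have s3 : (∑ k ∈ Finset.range K, 3 * (δ k ^ 2 * ((∑ i, (cc i - ct i) ^ 2) * ((n : ℝ) * κ ^ 2))))
              = 3 * ((n : ℝ) * κ ^ 2 * (∑ k ∈ Finset.range K, δ k ^ 2)) * (∑ i, (cc i - ct i) ^ 2) := by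
            calc (∑ k ∈ Finset.range K, 3 * (δ k ^ 2 * ((∑ i, (cc i - ct i) ^ 2) * ((n : ℝ) * κ ^ 2))))
                = ∑ k ∈ Finset.range K, (3 * ((n : ℝ) * κ ^ 2) * (∑ i, (cc i - ct i) ^ 2)) * δ k ^ 2 :=
                  Finset.sum_congr rfl fun k _ => by ring
              _ = (3 * ((n : ℝ) * κ ^ 2) * (∑ i, (cc i - ct i) ^ 2)) * (∑ k ∈ Finset.range K, δ k ^ 2) :=
                  (Finset.mul_sum _ _ _).symm
              _ = 3 * ((n : ℝ) * κ ^ 2 * (∑ k ∈ Finset.range K, δ k ^ 2)) * (∑ i, (cc i - ct i) ^ 2) := by ring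
          rw [Finset.sum_add_distrib, Finset.sum_add_distrib, s1, s2, s3]
  -- Hilbert-space decomposition
  have hVid : ((∑ ν, dc ν • φ ν) + ∑ k ∈ Finset.range K, (δc k * ∑ i, cc i * Uc i k) • Φc k) -
        ((∑ ν, dt ν • φ ν) + ∑ k ∈ Finset.range K, (δ k * ∑ i, ct i * U i k) • Φ k)
      = (∑ ν, (dc ν - dt ν) • φ ν)
        + (∑ k ∈ Finset.range K,
            (δc k * (∑ i, cc i * Uc i k) - δ k * (∑ i, ct i * U i k)) • Φ k)
        + (∑ k ∈ Finset.range K, (δc k * ∑ i, cc i * Uc i k) • (Φc k - Φ k)) := by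
    simp only [sub_smul, smul_sub, Finset.sum_sub_distrib]
    abel
  have e1 : ‖∑ ν, (dc ν - dt ν) • φ ν‖ ^ 2 = vnormSq (dc - dt) := by
    rw [orth_norm_sum Finset.univ hφ (fun ν => dc ν - dt ν)]
    simp [vnormSq]
  have e2 : ‖∑ k ∈ Finset.range K,
      (δc k * (∑ i, cc i * Uc i k) - δ k * (∑ i, ct i * U i k)) • Φ k‖ ^ 2
      = ∑ k ∈ Finset.range K,
        (δc k * (∑ i, cc i * Uc i k) - δ k * (∑ i, ct i * U i k)) ^ 2 :=
    orth_norm_sum (Finset.range K) hΦ _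
  have e3 : ‖∑ k ∈ Finset.range K, (δc k * ∑ i, cc i * Uc i k) • (Φc k - Φ k)‖ ^ 2
      ≤ (∑ k ∈ Finset.range K, (δc k * ∑ i, cc i * Uc i k) ^ 2) * (∑ k ∈ Finset.range K, ‖Φc k - Φ k‖ ^ 2) :=
    sum_smul_norm_le (Finset.range K) _ _
  have hSPHI0 : (0:ℝ) ≤ (∑ k ∈ Finset.range K, ‖Φc k - Φ k‖ ^ 2) := Finset.sum_nonneg fun k _ => sq_nonneg _
  have hAv : ‖∑ k ∈ Finset.range K, (δc k * ∑ i, cc i * Uc i k) • (Φc k - Φ k)‖ ^ 2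
      ≤ vnormSq cc * (n : ℝ) * κ' ^ 2 * (∑ k ∈ Finset.range K, δc k ^ 2) * (∑ k ∈ Finset.range K, ‖Φc k - Φ k‖ ^ 2) :=
    e3.trans (mul_le_mul_of_nonneg_right hac_sum hSPHI0)
  have hzmul : 3 * ((n : ℝ) * κ ^ 2 * (∑ k ∈ Finset.range K, δ k ^ 2)) * (∑ i, (cc i - ct i) ^ 2)
      ≤ 3 * ((n : ℝ) * κ ^ 2 * (∑ k ∈ Finset.range K, δ k ^ 2)) * (((frobSq Q₂) ^ 3 * vnormSq (Q₂ᵀ *ᵥ y)) * (∑ k, ((hpdt.1.eigenvalues k) ^ 2)⁻¹) * (∑ k, ((hpdc.1.eigenvalues k) ^ 2)⁻¹) * frobSq (Sc - St)) := by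
    apply mul_le_mul_of_nonneg_left hccct2
    positivity
  rw [hVid]
  calc ‖(∑ ν, (dc ν - dt ν) • φ ν)
        + (∑ k ∈ Finset.range K,
            (δc k * (∑ i, cc i * Uc i k) - δ k * (∑ i, ct i * U i k)) • Φ k)
        + (∑ k ∈ Finset.range K, (δc k * ∑ i, cc i * Uc i k) • (Φc k - Φ k))‖ ^ 2
      ≤ 2 * ‖∑ ν, (dc ν - dt ν) • φ ν‖ ^ 2
        + 4 * ‖∑ k ∈ Finset.range K,
            (δc k * (∑ i, cc i * Uc i k) - δ k * (∑ i, ct i * U i k)) • Φ k‖ ^ 2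
        + 4 * ‖∑ k ∈ Finset.range K, (δc k * ∑ i, cc i * Uc i k) • (Φc k - Φ k)‖ ^ 2 :=
      norm_split _ _ _
    _ ≤ 2 * (2 * (⨆ i, hA.eigenvalues i) * (((frobSq Q₂) ^ 3 * vnormSq (Q₂ᵀ *ᵥ y)) * (∑ k, ((hpdt.1.eigenvalues k) ^ 2)⁻¹) * (∑ k, ((hpdc.1.eigenvalues k) ^ 2)⁻¹) * frobSq St + vnormSq ct) * frobSq (Sc - St))
        + (12 * vnormSq cc * (∑ k ∈ Finset.range K, δc k ^ 2 * ∑ i, (Uc i k - U i k) ^ 2)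
          + 12 * (n : ℝ) * κ ^ 2 * vnormSq cc * (∑ k ∈ Finset.range K, (δc k - δ k) ^ 2)
          + 12 * ((n : ℝ) * κ ^ 2 * (∑ k ∈ Finset.range K, δ k ^ 2)) * (((frobSq Q₂) ^ 3 * vnormSq (Q₂ᵀ *ᵥ y)) * (∑ k, ((hpdt.1.eigenvalues k) ^ 2)⁻¹) * (∑ k, ((hpdc.1.eigenvalues k) ^ 2)⁻¹) * frobSq (Sc - St)))
        + 4 * (vnormSq cc * (n : ℝ) * κ' ^ 2 * (∑ k ∈ Finset.range K, δc k ^ 2) * (∑ k ∈ Finset.range K, ‖Φc k - Φ k‖ ^ 2)) := by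
        rw [e1, e2]
        linarith [hdfinal, hbsum, hzmul, hAv]
    _ = 4 * (vnormSq cc * (n : ℝ) * κ' ^ 2 * (∑ k ∈ Finset.range K, δc k ^ 2)) * (∑ k ∈ Finset.range K, ‖Φc k - Φ k‖ ^ 2) +
        12 * vnormSq cc * (∑ k ∈ Finset.range K, δc k ^ 2 * ∑ i, (Uc i k - U i k) ^ 2) +
        12 * (n : ℝ) * κ ^ 2 * vnormSq cc * (∑ k ∈ Finset.range K, (δc k - δ k) ^ 2) +
        (12 * ((n : ℝ) * κ ^ 2 * (∑ k ∈ Finset.range K, δ k ^ 2) *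
            ((frobSq Q₂) ^ 3 * vnormSq (Q₂ᵀ *ᵥ y)) * (∑ k, ((hpdt.1.eigenvalues k) ^ 2)⁻¹) * (∑ k, ((hpdc.1.eigenvalues k) ^ 2)⁻¹)) +
          2 * (2 * (⨆ i, hA.eigenvalues i) *
            (((frobSq Q₂) ^ 3 * vnormSq (Q₂ᵀ *ᵥ y)) * (∑ k, ((hpdt.1.eigenvalues k) ^ 2)⁻¹) * (∑ k, ((hpdc.1.eigenvalues k) ^ 2)⁻¹) * frobSq St + vnormSq ct))) * frobSq (Sc - St) := by
        ring
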